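/- Let E → B be a real vector bundle of finite rank over a compact Hausdorff space B, let A ⊆ C(B, ℝ) be a subalgebra that separates points of B and vanishes at no point of B, and let {s_j} be a family of continuous sections of E such that for every x ∈ B the vectors s_j(x) span the fibre E_x over ℝ. Then the A-submodule of continuous sections generated by the s_j is dense in the space of all continuous sections of E with the sup-norm (induced by a choice of bundle metric). -/
import Mathlib


open Bundle Set

open Set Submodule in
lemma exists_fin_subfamily_span_aux {M : Type*} [AddCommGroup M] [Module ℝ M]
    [FiniteDimensional ℝ M] {J : Type*} (v : J → M)
    (h : Submodule.span ℝ (Set.range v) = ⊤) :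
    ∃ (m : ℕ) (j : Fin m → J), Submodule.span ℝ (Set.range fun i => v (j i)) = ⊤ := by
  classical
  set bb := Module.finBasis ℝ M with hbb
  have hmem : ∀ i, ∃ T : Finset M, ↑T ⊆ Set.range v ∧ (bb i : M) ∈ span ℝ (T : Set M) :=
    fun i => mem_span_finite_of_mem_span (by rw [h]; trivial)
  choose T hTsub hTmem using hmem
  set S : Finset M := Finset.univ.biUnion T with hS
  have hSsub : (S : Set M) ⊆ Set.range v := by
    intro x hx
    simp only [hS, Finset.coe_biUnion, Set.mem_iUnion, Finset.mem_coe] at hx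
    obtain ⟨i, -, hi⟩ := hx
    exact hTsub i hi
  have hSspan : span ℝ (S : Set M) = ⊤ := by
    rw [eq_top_iff, ← bb.span_eq]
    refine span_le.2 ?_
    rintro x ⟨i, rfl⟩
    refine span_mono (s := (T i : Set M)) ?_ (hTmem i)
    intro y hy
    simp only [hS, Finset.coe_biUnion, Set.mem_iUnion, Finset.mem_coe]
    exact ⟨i, Finset.mem_univ i, hy⟩
  have hch : ∀ x : {x // x ∈ S}, ∃ j, v j = (x : M) := fun x => hSsub x.2
  choose jf hjf using hch
  refine ⟨S.card, fun i => jf (S.equivFin.symm i), ?_⟩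
  rw [eq_top_iff, ← hSspan]
  refine span_le.2 ?_
  intro x hx
  refine subset_span ⟨S.equivFin ⟨x, hx⟩, ?_⟩
  simp only []
  rw [Equiv.symm_apply_apply, hjf]



lemma local_rep_aux {B : Type*} [TopologicalSpace B]
    {F : Type*} [NormedAddCommGroup F] [NormedSpace ℝ F] [FiniteDimensional ℝ F]
    (E : B → Type*) [∀ b, NormedAddCommGroup (E b)] [∀ b, NormedSpace ℝ (E b)]
    [TopologicalSpace (TotalSpace F E)] [FiberBundle F E] [VectorBundle ℝ F E]
    {J : Type*} (z : J → ∀ b, E b)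
    (hzcont : ∀ j, Continuous fun b => (⟨b, z j b⟩ : TotalSpace F E))
    (hspan : ∀ b, Submodule.span ℝ (Set.range fun j => z j b) = ⊤)
    (t : ∀ b, E b) (ht : Continuous fun b => (⟨b, t b⟩ : TotalSpace F E)) (b₀ : B) :
    ∃ (m : ℕ) (jj : Fin m → J) (V : Set B) (c : B → Fin m → ℝ),
      IsOpen V ∧ b₀ ∈ V ∧ ContinuousOn c V ∧
        ∀ b ∈ V, ∑ i, c b i • z (jj i) b = t b := by
  classical
  set e := trivializationAt F E b₀ with he
  have hb₀ : b₀ ∈ e.baseSet := FiberBundle.mem_baseSet_trivializationAt F E b₀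
  haveI : FiniteDimensional ℝ (E b₀) :=
    LinearEquiv.finiteDimensional (e.continuousLinearEquivAt ℝ b₀ hb₀).symm.toLinearEquiv
  obtain ⟨m, jj, hspanb⟩ := exists_fin_subfamily_span_aux (fun j => z j b₀) (hspan b₀)
  -- the local frame in the trivialization
  set w : Fin m → B → F := fun i b => e.continuousLinearMapAt ℝ b (z (jj i) b) with hw
  have hcontsec : ∀ (s : ∀ b, E b), (Continuous fun b => (⟨b, s b⟩ : TotalSpace F E)) →
      ContinuousOn (fun b => e.continuousLinearMapAt ℝ b (s b)) e.baseSet := by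
    intro s hs
    have h1 : ContinuousOn (fun b => (e ⟨b, s b⟩).2) e.baseSet := by
      refine continuous_snd.comp_continuousOn ?_
      exact e.continuousOn.comp hs.continuousOn (fun b hb => e.mem_source.2 hb)
    refine h1.congr ?_
    intro b hb
    show e.continuousLinearMapAt ℝ b (s b) = (e ⟨b, s b⟩).2
    rw [e.continuousLinearMapAt_apply ℝ, e.coe_linearMapAt_of_mem hb]
  have hwc : ∀ i, ContinuousOn (w i) e.baseSet := fun i => hcontsec _ (hzcont (jj i))
  -- the parametrized linear map
  set T : B → (Fin m → ℝ) →L[ℝ] F := fun b =>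
    ∑ i, ContinuousLinearMap.smulRightL ℝ (Fin m → ℝ) F (ContinuousLinearMap.proj i) (w i b)
    with hT
  have hTapp : ∀ b c, T b c = ∑ i, c i • w i b := by
    intro b c
    simp [hT, ContinuousLinearMap.sum_apply, ContinuousLinearMap.smulRightL,
      ContinuousLinearMap.smulRightₗ]
  have hTcont : ContinuousOn T e.baseSet := by
    refine continuousOn_finset_sum _ (fun i _ => ?_)
    exact (ContinuousLinearMap.smulRightL ℝ (Fin m → ℝ) F
      (ContinuousLinearMap.proj i)).continuous.comp_continuousOn (hwc i)
  -- surjectivity at b₀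
  have hwspan : Submodule.span ℝ (Set.range fun i => w i b₀) = ⊤ := by
    have : (fun i => w i b₀) = fun i => (e.continuousLinearEquivAt ℝ b₀ hb₀ :
        E b₀ →ₗ[ℝ] F) (z (jj i) b₀) := by
      funext i
      simp [hw, Trivialization.continuousLinearMapAt_apply, e.coe_linearMapAt_of_mem hb₀]
    rw [this]
    have h2 : (Set.range fun i => ((e.continuousLinearEquivAt ℝ b₀ hb₀ : E b₀ →ₗ[ℝ] F))
        (z (jj i) b₀)) = (e.continuousLinearEquivAt ℝ b₀ hb₀ : E b₀ →ₗ[ℝ] F) ''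
        (Set.range fun i => z (jj i) b₀) := by
      rw [← Set.range_comp]; rfl
    rw [h2, Submodule.span_image, hspanb, Submodule.map_top, LinearMap.range_eq_top]
    exact (e.continuousLinearEquivAt ℝ b₀ hb₀).surjective
  have hsurj : Function.Surjective (T b₀) := by
    intro v
    have hv : v ∈ Submodule.span ℝ (Set.range fun i => w i b₀) := by rw [hwspan]; trivial
    obtain ⟨c, hc⟩ := (Submodule.mem_span_range_iff_exists_fun ℝ).1 hv
    exact ⟨c, by rw [hTapp]; exact hc⟩
  obtain ⟨S₀ₗ, hS₀⟩ := ((T b₀ : (Fin m → ℝ) →ₗ[ℝ] F)).exists_rightInverse_of_surjective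
    (LinearMap.range_eq_top.2 hsurj)
  set S₀ : F →L[ℝ] (Fin m → ℝ) := S₀ₗ.toContinuousLinearMap with hS₀def
  set G : B → F →L[ℝ] F := fun b => (T b).comp S₀ with hG
  have hGcont : ContinuousOn G e.baseSet := hTcont.clm_comp continuousOn_const
  have hG₀ : G b₀ = 1 := by
    ext v
    have := LinearMap.ext_iff.1 hS₀ v
    simpa [hG, hS₀def] using this
  set V : Set B := e.baseSet ∩ G ⁻¹' Metric.ball (1 : F →L[ℝ] F) 1 with hV
  have hVopen : IsOpen V := hGcont.isOpen_inter_preimage e.open_baseSet Metric.isOpen_ball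
  have hb₀V : b₀ ∈ V := ⟨hb₀, by simp [hG₀]⟩
  have hunit : ∀ b ∈ V, IsUnit (G b) := by
    intro b hb
    have h1 : ‖(1 : F →L[ℝ] F) - G b‖ < 1 := by
      have := hb.2
      rw [Set.mem_preimage, Metric.mem_ball, dist_eq_norm] at this
      rwa [norm_sub_rev]
    by_contra hcon
    exact nonunits.subset_compl_ball (mem_nonunits_iff.2 hcon) hb.2
  set c : B → Fin m → ℝ := fun b =>
    S₀ (Ring.inverse (G b) (e.continuousLinearMapAt ℝ b (t b))) with hc
  have htc : ContinuousOn (fun b => e.continuousLinearMapAt ℝ b (t b)) e.baseSet :=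
    hcontsec t ht
  have hinvcont : ContinuousOn (fun b => Ring.inverse (G b)) V := by
    intro b hb
    have h1 : ContinuousAt Ring.inverse (G b) := by
      have := NormedRing.inverse_continuousAt (hunit b hb).unit
      rwa [IsUnit.unit_spec] at this
    exact h1.comp_continuousWithinAt ((hGcont.mono Set.inter_subset_left) b hb)
  have hccont : ContinuousOn c V := by
    refine S₀.continuous.comp_continuousOn ?_
    exact hinvcont.clm_apply (htc.mono Set.inter_subset_left)
  refine ⟨m, jj, V, c, hVopen, hb₀V, hccont, ?_⟩
  intro b hb
  have hbbase : b ∈ e.baseSet := hb.1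
  have key : T b (c b) = e.continuousLinearMapAt ℝ b (t b) := by
    have h2 : T b (S₀ (Ring.inverse (G b) (e.continuousLinearMapAt ℝ b (t b)))) =
        G b (Ring.inverse (G b) (e.continuousLinearMapAt ℝ b (t b))) := rfl
    rw [hc]
    rw [h2]
    obtain ⟨u, hu⟩ := hunit b hb
    rw [← hu, Ring.inverse_unit, ← ContinuousLinearMap.mul_apply, u.mul_inv,
      ContinuousLinearMap.one_apply]
  have lhs : e.continuousLinearMapAt ℝ b (∑ i, c b i • z (jj i) b) =
      e.continuousLinearMapAt ℝ b (t b) := by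
    rw [map_sum]
    simp_rw [map_smul]
    rw [← hTapp b (c b)]
    exact key
  have := congrArg (e.symmL ℝ b) lhs
  rwa [e.symmL_continuousLinearMapAt hbbase, e.symmL_continuousLinearMapAt hbbase] at this


/-- **Stone–Weierstrass for vector bundles.**  Let `E → B` be a real vector bundle of finite
rank over a compact Hausdorff base, equipped with a bundle metric (here: norms on the fibres
varying continuously over the total space).  Let `A ⊆ C(B, ℝ)` be a subalgebra separating
points and vanishing at no point, and let `(z j)` be a family of continuous sections spanning
every fibre.  Then the `A`-module generated by the `z j` is dense in the space of continuous
sections for the sup-norm. -/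
theorem stoneWeierstrass_vectorBundle
    {B : Type*} [TopologicalSpace B] [CompactSpace B] [T2Space B]
    {F : Type*} [NormedAddCommGroup F] [NormedSpace ℝ F] [FiniteDimensional ℝ F]
    (E : B → Type*) [∀ b, NormedAddCommGroup (E b)] [∀ b, NormedSpace ℝ (E b)]
    [TopologicalSpace (TotalSpace F E)] [FiberBundle F E] [VectorBundle ℝ F E]
    -- the fibrewise norms form a continuous bundle metric
    (hmetric : Continuous fun p : TotalSpace F E => ‖p.2‖)
    (A : Subalgebra ℝ C(B, ℝ))
    (hsep : ∀ x y : B, x ≠ y → ∃ h ∈ A, h x ≠ h y)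
    (hnonvanish : ∀ x : B, ∃ h ∈ A, h x ≠ 0)
    {J : Type*} (z : J → ∀ b, E b)
    (hzcont : ∀ j, Continuous fun b => (⟨b, z j b⟩ : TotalSpace F E))
    (hspan : ∀ b, Submodule.span ℝ (Set.range fun j => z j b) = ⊤) :
    ∀ (t : ∀ b, E b), Continuous (fun b => (⟨b, t b⟩ : TotalSpace F E)) →
      ∀ ε : ℝ, 0 < ε →
        ∃ (k : ℕ) (a : Fin k → C(B, ℝ)) (j : Fin k → J),
          (∀ i, a i ∈ A) ∧ ∀ b : B, ‖t b - ∑ i, a i b • z (j i) b‖ < ε := by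
  classical
  intro t ht ε hε
  -- Stone–Weierstrass for scalars: A is dense in C(B, ℝ)
  have hdense : ∀ (g : C(B, ℝ)) (δ : ℝ), 0 < δ → ∃ a ∈ A, ∀ b, |a b - g b| < δ := by
    intro g δ hδ
    have hsep' : A.SeparatesPoints := by
      intro x y hxy
      obtain ⟨h, hA, hne⟩ := hsep x y hxy
      exact ⟨_, ⟨h, hA, rfl⟩, hne⟩
    have htop := ContinuousMap.subalgebra_topologicalClosure_eq_top_of_separatesPoints A hsep'
    have hmem : g ∈ A.topologicalClosure := htop ▸ Submodule.mem_top (R := ℝ)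
    have hmem' : g ∈ closure (A : Set C(B, ℝ)) := hmem
    obtain ⟨a, haA, hdist⟩ := Metric.mem_closure_iff.1 hmem' δ hδ
    refine ⟨a, haA, fun b => ?_⟩
    calc |a b - g b| = dist (a b) (g b) := by rw [Real.dist_eq]
      _ ≤ dist a g := ContinuousMap.dist_apply_le_dist b
      _ = dist g a := dist_comm _ _
      _ < δ := hdist
  -- local exact representations
  have hloc := fun b₀ => local_rep_aux E z hzcont hspan t ht b₀
  choose m jj V c hVopen hb₀V hccont hrep using hloc
  -- finite subcover
  obtain ⟨s, hs⟩ := isCompact_univ.elim_finite_subcover V hVopen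
    (fun x _ => Set.mem_iUnion.2 ⟨x, hb₀V x⟩)
  -- partition of unity
  obtain ⟨f, hf⟩ := PartitionOfUnity.exists_isSubordinate (ι := ↥s) (X := B)
    isClosed_univ (fun i => V i) (fun i => hVopen i)
    (by intro x _
        obtain ⟨i, his, hxi⟩ := Set.mem_iUnion₂.1 (hs (Set.mem_univ x))
        exact Set.mem_iUnion.2 ⟨⟨i, his⟩, hxi⟩)
  -- flattened index type
  set P := Σ i : ↥s, Fin (m (i : B)) with hP
  -- the coefficient functions
  have hgcont : ∀ p : P, Continuous fun b => f p.1 b * c p.1 b p.2 := by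
    rintro ⟨i, l⟩
    rw [continuous_iff_continuousAt]
    intro b
    by_cases hb : b ∈ V (i : B)
    · have h1 : ContinuousWithinAt (fun b => f i b * c (i : B) b l) (V (i : B)) b :=
        ((f i).continuous.continuousWithinAt).mul
          (((continuous_apply l).comp_continuousOn (hccont i)) b hb)
      exact h1.continuousAt ((hVopen _).mem_nhds hb)
    · have hb' : b ∈ (tsupport (f i))ᶜ := fun hmem => hb (hf i hmem)
      have : ∀ᶠ x in nhds b, f i x * c (i : B) x l = 0 := by
        filter_upwards [(isClosed_tsupport (f i)).isOpen_compl.mem_nhds hb'] with x hx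
        rw [image_eq_zero_of_notMem_tsupport hx, zero_mul]
      exact ContinuousAt.congr continuousAt_const (by filter_upwards [this] with x hx; rw [hx])
  set g : P → C(B, ℝ) := fun p => ⟨fun b => f p.1 b * c p.1 b p.2, hgcont p⟩ with hg
  -- the exact global representation
  have hgsum : ∀ b, ∑ p : P, g p b • z (jj (p.1 : B) p.2) b = t b := by
    intro b
    rw [← Finset.univ_sigma_univ, Finset.sum_sigma]
    have h1 : ∀ i : ↥s, ∑ l : Fin (m (i : B)), g ⟨i, l⟩ b • z (jj (i : B) l) b
        = f i b • t b := by
      intro i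
      by_cases hb : b ∈ V (i : B)
      · rw [← hrep _ b hb, Finset.smul_sum]
        refine Finset.sum_congr rfl fun l _ => ?_
        show (f i b * c (i : B) b l) • z (jj (i : B) l) b = _
        rw [mul_smul]
      · have hfz : f i b = 0 := image_eq_zero_of_notMem_tsupport (fun hmem => hb (hf i hmem))
        simp only [hg, ContinuousMap.coe_mk, hfz, zero_mul, zero_smul, Finset.sum_const_zero]
    rw [Finset.sum_congr rfl fun i _ => h1 i, ← Finset.sum_smul]
    have : ∑ i : ↥s, f i b = 1 := by
      rw [← finsum_eq_sum_of_fintype]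
      exact f.sum_eq_one (Set.mem_univ b)
    rw [this, one_smul]
  -- a uniform bound on the sections
  have hCp : ∀ p : P, ∃ C : ℝ, ∀ b, ‖z (jj (p.1 : B) p.2) b‖ ≤ C := by
    intro p
    have hcont : Continuous fun b => ‖z (jj (p.1 : B) p.2) b‖ :=
      hmetric.comp (hzcont _)
    obtain ⟨C, hC⟩ := (isCompact_range hcont).bddAbove
    exact ⟨C, fun b => hC (Set.mem_range_self b)⟩
  choose Cp hCp' using hCp
  set C : ℝ := (∑ p : P, max (Cp p) 0) + 1 with hC
  have hCpos : 0 < C := by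
    have : (0 : ℝ) ≤ ∑ p : P, max (Cp p) 0 :=
      Finset.sum_nonneg fun p _ => le_max_right _ _
    linarith
  have hCb : ∀ p : P, ∀ b, ‖z (jj (p.1 : B) p.2) b‖ ≤ C := by
    intro p b
    refine (hCp' p b).trans ?_
    calc Cp p ≤ max (Cp p) 0 := le_max_left _ _
      _ ≤ ∑ q : P, max (Cp q) 0 :=
        Finset.single_le_sum (f := fun q : P => max (Cp q) 0)
          (fun q _ => le_max_right _ _) (Finset.mem_univ p)
      _ ≤ C := by linarith
  -- approximate the coefficients
  set k := Fintype.card P with hk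
  set δ : ℝ := ε / (k * C + 1) with hδ
  have hδpos : 0 < δ := by
    apply div_pos hε
    have : (0:ℝ) ≤ k * C := mul_nonneg (Nat.cast_nonneg k) hCpos.le
    linarith
  have happrox : ∀ p : P, ∃ a ∈ A, ∀ b, |a b - g p b| < δ :=
    fun p => hdense (g p) δ hδpos
  choose a' ha'A ha' using happrox
  set eqv : Fin k ≃ P := (Fintype.equivFin P).symm with heqv
  refine ⟨k, fun i => a' (eqv i), fun i => jj ((eqv i).1 : B) (eqv i).2,
    fun i => ha'A _, ?_⟩
  intro b
  have hsum : ∑ i : Fin k, a' (eqv i) b • z (jj ((eqv i).1 : B) (eqv i).2) b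
      = ∑ p : P, a' p b • z (jj (p.1 : B) p.2) b :=
    Equiv.sum_comp eqv (fun p => a' p b • z (jj (p.1 : B) p.2) b)
  rw [hsum, ← hgsum b, ← Finset.sum_sub_distrib]
  have h1 : ∀ p : P, g p b • z (jj (p.1 : B) p.2) b - a' p b • z (jj (p.1 : B) p.2) b
      = (g p b - a' p b) • z (jj (p.1 : B) p.2) b := fun p => (sub_smul _ _ _).symm
  rw [Finset.sum_congr rfl fun p _ => h1 p]
  calc ‖∑ p : P, (g p b - a' p b) • z (jj (p.1 : B) p.2) b‖
      ≤ ∑ p : P, ‖(g p b - a' p b) • z (jj (p.1 : B) p.2) b‖ := norm_sum_le _ _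
    _ ≤ ∑ _p : P, δ * C := by
        refine Finset.sum_le_sum fun p _ => ?_
        rw [norm_smul, Real.norm_eq_abs]
        have h2 : |g p b - a' p b| ≤ δ := by
          rw [abs_sub_comm]; exact (ha' p b).le
        exact mul_le_mul h2 (hCb p b) (norm_nonneg _) hδpos.le
    _ = k * C * δ := by rw [Finset.sum_const, Finset.card_univ, ← hk]; ring
    _ < ε := by
        rw [hδ]
        have hkC : (0:ℝ) ≤ (k : ℝ) * C := mul_nonneg (Nat.cast_nonneg k) hCpos.le
        have hden : (0:ℝ) < (k : ℝ) * C + 1 := by linarith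
        rw [← mul_div_assoc, div_lt_iff₀ hden]
        nlinarith
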